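/- Let B be an exact Krull–Schmidt Frobenius k-category whose stable category B̄ has finite-dimensional Hom-spaces, and let C be a functorially finite maximal (d−1)-orthogonal subcategory with d ≥ 2 and C̄[d] = C̄. Then for every M ∈ mod-C̄, Tor^C_i(M, C̄) = 0 for all i ≠ 0, d+1. -/

import Mathlib

open CategoryTheory CategoryTheory.Limits

universe v u

/-- Bundled data of an exact Krull–Schmidt Frobenius `k`-category: an additive
`k`-linear category equipped with a class of admissible short exact sequences,
a class of projective(-injective) objects satisfying the usual lifting
properties on both sides (the Frobenius property), chosen projective covers
with syzygies and injective envelopes with cosyzygies (enough projectives and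
enough injectives), the Krull--Schmidt property, and Hom-finiteness of the
stable category (Hom's modulo maps factoring through projectives). -/
structure FrobeniusSetup (k : Type) [Field k] (B : Type u) [Category.{v} B] [Preadditive B]
    [CategoryTheory.Linear k B] [HasFiniteBiproducts B] [HasBinaryBiproducts B] : Type (max u v) where
  /-- the admissible short exact sequences `0 → X → Y → Z → 0` of the exact structure -/
  IsSES : ∀ {X Y Z : B}, (X ⟶ Y) → (Y ⟶ Z) → Prop
  /-- the projective (equivalently injective) objects -/
  Proj : B → Prop
  ses_zero : ∀ {X Y Z : B} (f : X ⟶ Y) (g : Y ⟶ Z), IsSES f g → f ≫ g = 0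
  /-- in an admissible short exact sequence, `f` is a kernel of `g` -/
  ses_ker : ∀ {X Y Z : B} (f : X ⟶ Y) (g : Y ⟶ Z), IsSES f g →
      ∀ {W : B} (u : W ⟶ Y), u ≫ g = 0 → ∃! v : W ⟶ X, v ≫ f = u
  /-- in an admissible short exact sequence, `g` is a cokernel of `f` -/
  ses_coker : ∀ {X Y Z : B} (f : X ⟶ Y) (g : Y ⟶ Z), IsSES f g →
      ∀ {W : B} (u : Y ⟶ W), f ≫ u = 0 → ∃! v : Z ⟶ W, g ≫ v = u
  /-- admissible short exact sequences are closed under isomorphism -/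
  ses_iso : ∀ {X Y Z X' Y' Z' : B} (f : X ⟶ Y) (g : Y ⟶ Z)
      (iX : X ≅ X') (iY : Y ≅ Y') (iZ : Z ≅ Z') (f' : X' ⟶ Y') (g' : Y' ⟶ Z'),
      IsSES f g → f ≫ iY.hom = iX.hom ≫ f' → g ≫ iZ.hom = iY.hom ≫ g' → IsSES f' g'
  /-- split exact sequences are admissible -/
  ses_split : ∀ X Y : B, IsSES (biprod.inl : X ⟶ X ⊞ Y) (biprod.snd : X ⊞ Y ⟶ Y)
  /-- the `Proj` objects are precisely the projective objects of the exact structure -/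
  proj_iff : ∀ P : B, Proj P ↔
      (∀ {X Y Z : B} (f : X ⟶ Y) (g : Y ⟶ Z), IsSES f g →
        ∀ h : P ⟶ Z, ∃ l : P ⟶ Y, l ≫ g = h)
  /-- the Frobenius property: `Proj` objects are precisely the injective objects -/
  inj_iff : ∀ P : B, Proj P ↔
      (∀ {X Y Z : B} (f : X ⟶ Y) (g : Y ⟶ Z), IsSES f g →
        ∀ h : X ⟶ P, ∃ l : Y ⟶ P, f ≫ l = h)
  /-- a chosen projective cover (enough projectives) -/
  P : B → B
  projP : ∀ X : B, Proj (P X)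
  pr : ∀ X : B, P X ⟶ X
  /-- the chosen syzygy -/
  syz : B → B
  syzMono : ∀ X : B, syz X ⟶ P X
  ses_syz : ∀ X : B, IsSES (syzMono X) (pr X)
  /-- a chosen injective envelope (enough injectives) -/
  I : B → B
  projI : ∀ X : B, Proj (I X)
  en : ∀ X : B, X ⟶ I X
  /-- the chosen cosyzygy, i.e. the suspension of the stable category -/
  cosyz : B → B
  cosyzEpi : ∀ X : B, I X ⟶ cosyz X
  ses_cosyz : ∀ X : B, IsSES (en X) (cosyzEpi X)
  /-- the Krull–Schmidt property: every object is a finite biproduct of objects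
  with local endomorphism rings -/
  krullSchmidt : ∀ X : B, ∃ (n : ℕ) (Y : Fin n → B),
      (∀ i, IsLocalRing (End (Y i))) ∧ Nonempty (X ≅ ⨁ Y)
  /-- Hom-finiteness of the stable category -/
  homFinite : ∀ X Y : B, FiniteDimensional k
      ((X ⟶ Y) ⧸ Submodule.span k
        {f : X ⟶ Y | ∃ (Q : B) (g : X ⟶ Q) (h : Q ⟶ Y), Proj Q ∧ f = g ≫ h})

namespace FrobeniusSetup

variable {k : Type} [Field k] {B : Type u} [Category.{v} B] [Preadditive B]
  [CategoryTheory.Linear k B] [HasFiniteBiproducts B] [HasBinaryBiproducts B] (S : FrobeniusSetup k B)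

/-- The ideal of maps factoring through a projective object. -/
def projIdeal (X Y : B) : Submodule k (X ⟶ Y) :=
  Submodule.span k {f : X ⟶ Y | ∃ (Q : B) (g : X ⟶ Q) (h : Q ⟶ Y), S.Proj Q ∧ f = g ≫ h}

/-- Stable Hom: morphisms in the stable category `B̄`. -/
def sHom (X Y : B) : Type v := (X ⟶ Y) ⧸ S.projIdeal X Y

noncomputable instance (X Y : B) : AddCommGroup (S.sHom X Y) :=
  inferInstanceAs (AddCommGroup ((X ⟶ Y) ⧸ S.projIdeal X Y))

noncomputable instance (X Y : B) : Module k (S.sHom X Y) :=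
  inferInstanceAs (Module k ((X ⟶ Y) ⧸ S.projIdeal X Y))

/-- The class of a morphism in the stable category. -/
def sMk {X Y : B} (f : X ⟶ Y) : S.sHom X Y := Submodule.Quotient.mk f

/-- Vanishing of the stable Hom-space `B̄(X,Y)`. -/
def sVanish (X Y : B) : Prop := S.projIdeal X Y = ⊤

/-- `X` and `Y` are isomorphic in the stable category `B̄`. -/
def StIso (X Y : B) : Prop :=
  ∃ (f : X ⟶ Y) (g : Y ⟶ X),
    f ≫ g - 𝟙 X ∈ S.projIdeal X X ∧ g ≫ f - 𝟙 Y ∈ S.projIdeal Y Y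

/-- The shift (suspension) `X[n]` in the stable category: iterated cosyzygies for
`n ≥ 0` and iterated syzygies for `n < 0`. -/
def shift : ℤ → B → B
  | Int.ofNat n, X => S.cosyz^[n] X
  | Int.negSucc n, X => S.syz^[n + 1] X

/-- `Ext^i_B(X,Y) = 0`, expressed via the standard identification
`Ext^i(X,Y) ≅ B̄(Ω^i X, Y)` for `i ≥ 1` valid in a Frobenius category. -/
def extVanish (i : ℕ) (X Y : B) : Prop := S.sVanish (S.syz^[i] X) Y

/-- `C` is a maximal `(d-1)`-orthogonal subcategory of `B`. -/
def MaxOrthogonal (C : Set B) (d : ℕ) : Prop :=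
  (∀ X : B, X ∈ C ↔ ∀ i : ℕ, 1 ≤ i → i < d → ∀ C₀ ∈ C, S.extVanish i X C₀) ∧
  (∀ Y : B, Y ∈ C ↔ ∀ i : ℕ, 1 ≤ i → i < d → ∀ C₀ ∈ C, S.extVanish i C₀ Y)

/-- `C` is functorially finite in `B`: every object admits a right and a left
`C`-approximation. -/
def FunctoriallyFinite (_S : FrobeniusSetup k B) (C : Set B) : Prop :=
  (∀ X : B, ∃ C₀ ∈ C, ∃ f : C₀ ⟶ X, ∀ C₁ ∈ C, ∀ g : C₁ ⟶ X, ∃ h : C₁ ⟶ C₀, h ≫ f = g) ∧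
  (∀ X : B, ∃ C₀ ∈ C, ∃ f : X ⟶ C₀, ∀ C₁ ∈ C, ∀ g : X ⟶ C₁, ∃ h : C₀ ⟶ C₁, f ≫ h = g)

/-- The subcategory `E_j = {X | B̄(C, X[i]) = 0 for 1 ≤ i ≤ d-1, i ≠ j}`. -/
def Esub (C : Set B) (d j : ℕ) : Set B :=
  {X : B | ∀ i : ℕ, 1 ≤ i → i ≤ d - 1 → i ≠ j → ∀ C₀ ∈ C, S.sVanish C₀ (S.cosyz^[i] X)}

/-- `C̄[d] = C̄`: the `d`-th syzygy of every object of `C` again lies in `C`,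
up to stable isomorphism (i.e. up to projective summands). -/
def ShiftStable (C : Set B) (d : ℕ) : Prop :=
  ∀ C₀ ∈ C, ∃ C₁ ∈ C, S.StIso (S.syz^[d] C₀) C₁

end FrobeniusSetup
namespace FrobeniusSetup

section FunctorCats

variable {k : Type} [Field k] {B : Type u} [Category.{v} B] [Preadditive B]
  [CategoryTheory.Linear k B] [HasFiniteBiproducts B] [HasBinaryBiproducts B]
  (S : FrobeniusSetup k B)

/-- Postcomposition on stable Hom's. -/
noncomputable def sComp (X : B) {Y Z : B} (w : Y ⟶ Z) : S.sHom X Y →ₗ[k] S.sHom X Z :=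
  Submodule.mapQ _ _ (Linear.rightComp k X w) (by
    simp only [projIdeal, Submodule.span_le]
    rintro f ⟨Q, g, h, hQ, rfl⟩
    exact Submodule.mem_comap.2 (Submodule.subset_span ⟨Q, g, h ≫ w, hQ, by simp⟩))

/-- Precomposition on stable Hom's. -/
noncomputable def sPre {W X : B} (u : W ⟶ X) (Y : B) : S.sHom X Y →ₗ[k] S.sHom W Y :=
  Submodule.mapQ _ _ (Linear.leftComp k Y u) (by
    simp only [projIdeal, Submodule.span_le]
    rintro f ⟨Q, g, h, hQ, rfl⟩
    exact Submodule.mem_comap.2 (Submodule.subset_span ⟨Q, u ≫ g, h, hQ, by simp⟩))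

@[simp] lemma sComp_mk (X : B) {Y Z : B} (w : Y ⟶ Z) (f : X ⟶ Y) :
    S.sComp X w (S.sMk f) = S.sMk (f ≫ w) := rfl

@[simp] lemma sPre_mk {W X : B} (u : W ⟶ X) (Y : B) (f : X ⟶ Y) :
    S.sPre u Y (S.sMk f) = S.sMk (u ≫ f) := rfl

variable (CC : Set B)

/-- The restriction to `C` of the representable functor `B(-,X)`; for `X ∈ C`
these are exactly the projective objects of `mod-C`. -/
def LinRep (X : B) : (ObjectProperty.FullSubcategory (· ∈ CC))ᵒᵖ ⥤ ModuleCat k :=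
  (ObjectProperty.ι (· ∈ CC)).op ⋙ (linearYoneda k B).obj X

/-- The natural transformation `B(-,X) ⟶ B(-,Y)` induced by `w : X ⟶ Y`. -/
def lMap {X Y : B} (w : X ⟶ Y) : LinRep (k := k) CC X ⟶ LinRep CC Y :=
  Functor.whiskerLeft (ObjectProperty.ι (· ∈ CC)).op
    ((linearYoneda k B).map w)

/-- The restriction to `C̄` of the stable representable functor `B̄(-,X)`. -/
noncomputable def SRep (X : B) : (ObjectProperty.FullSubcategory (· ∈ CC))ᵒᵖ ⥤ ModuleCat k where
  obj c := ModuleCat.of k (S.sHom c.unop.obj X)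
  map {c c'} u := ModuleCat.ofHom (S.sPre (u.unop.hom : c'.unop.obj ⟶ c.unop.obj) X)
  map_id c := by
    ext x
    obtain ⟨f, rfl⟩ := Submodule.Quotient.mk_surjective _ x
    show S.sMk ((𝟙 c.unop.obj : c.unop.obj ⟶ c.unop.obj) ≫ f) = S.sMk f
    rw [Category.id_comp]
  map_comp {c c' c''} u v := by
    ext x
    obtain ⟨f, rfl⟩ := Submodule.Quotient.mk_surjective _ x
    show S.sMk (((v.unop.hom : c''.unop.obj ⟶ c'.unop.obj) ≫
        (u.unop.hom : c'.unop.obj ⟶ c.unop.obj)) ≫ f)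
      = S.sMk ((v.unop.hom : c''.unop.obj ⟶ c'.unop.obj) ≫
        ((u.unop.hom : c'.unop.obj ⟶ c.unop.obj) ≫ f))
    rw [Category.assoc]

/-- The natural transformation `B̄(-,X) ⟶ B̄(-,Y)` induced by `w : X ⟶ Y`. -/
noncomputable def sMap {X Y : B} (w : X ⟶ Y) : S.SRep CC X ⟶ S.SRep CC Y where
  app c := ModuleCat.ofHom (S.sComp c.unop.obj w)
  naturality {c c'} u := by
    ext x
    obtain ⟨f, rfl⟩ := Submodule.Quotient.mk_surjective _ x
    show S.sMk (((u.unop.hom : c'.unop.obj ⟶ c.unop.obj) ≫ f) ≫ w)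
      = S.sMk ((u.unop.hom : c'.unop.obj ⟶ c.unop.obj) ≫ (f ≫ w))
    rw [Category.assoc]

/-- A functor on `C` underlies a functor on the stable category `C̄` iff it kills
all maps factoring through a projective object of `B`. -/
def KillsProj (M : (ObjectProperty.FullSubcategory (· ∈ CC))ᵒᵖ ⥤ ModuleCat k) : Prop :=
  ∀ (c c' : (ObjectProperty.FullSubcategory (· ∈ CC))ᵒᵖ) (u : c ⟶ c'),
    (u.unop.hom : c'.unop.obj ⟶ c.unop.obj) ∈ S.projIdeal c'.unop.obj c.unop.obj → M.map u = 0

/-- `M` is a finitely presented k-linear contravariant functor on the stable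
category `C̄`, i.e. an object of `mod-C̄`: it admits a projective presentation
`B̄(-,C₁) → B̄(-,C₀) → M → 0` by (restricted) stable representables. -/
def IsFPStable (M : (ObjectProperty.FullSubcategory (· ∈ CC))ᵒᵖ ⥤ ModuleCat k) : Prop :=
  ∃ (C₁ C₀ : B), C₁ ∈ CC ∧ C₀ ∈ CC ∧
    ∃ (φ : S.SRep CC C₁ ⟶ S.SRep CC C₀) (ε : S.SRep CC C₀ ⟶ M),
      ∀ c, Function.Surjective (ε.app c) ∧ Function.Exact (φ.app c) (ε.app c)

/-- `M` is a finitely presented k-linear contravariant functor on `C`,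
i.e. an object of `mod-C`. -/
def IsFP (M : (ObjectProperty.FullSubcategory (· ∈ CC))ᵒᵖ ⥤ ModuleCat k) : Prop :=
  ∃ (C₁ C₀ : B), C₁ ∈ CC ∧ C₀ ∈ CC ∧
    ∃ (φ : LinRep (k := k) CC C₁ ⟶ LinRep CC C₀) (ε : LinRep (k := k) CC C₀ ⟶ M),
      ∀ c, Function.Surjective (ε.app c) ∧ Function.Exact (φ.app c) (ε.app c)

end FunctorCats

end FrobeniusSetup



namespace FrobeniusSetup

section Helpers

variable {k : Type} [Field k] {B : Type u} [Category.{v} B] [Preadditive B]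
  [CategoryTheory.Linear k B] [HasFiniteBiproducts B] [HasBinaryBiproducts B]
  (S : FrobeniusSetup k B)

lemma mem_projIdeal_of_factor {X Y Q : B} (hQ : S.Proj Q) (a : X ⟶ Q) (b : Q ⟶ Y) :
    a ≫ b ∈ S.projIdeal X Y :=
  Submodule.subset_span ⟨Q, a, b, hQ, rfl⟩

lemma mem_projIdeal_src {X Y : B} (hX : S.Proj X) (f : X ⟶ Y) : f ∈ S.projIdeal X Y := by
  simpa using S.mem_projIdeal_of_factor hX (𝟙 X) f

lemma mem_projIdeal_tgt {X Y : B} (hY : S.Proj Y) (f : X ⟶ Y) : f ∈ S.projIdeal X Y := by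
  simpa using S.mem_projIdeal_of_factor hY f (𝟙 Y)

lemma sVanish_src {X Y : B} (hX : S.Proj X) : S.sVanish X Y :=
  eq_top_iff.mpr fun f _ => S.mem_projIdeal_src hX f

lemma sVanish_tgt {X Y : B} (hY : S.Proj Y) : S.sVanish X Y :=
  eq_top_iff.mpr fun f _ => S.mem_projIdeal_tgt hY f

lemma comp_mem_projIdeal_left {W X Y : B} (u : W ⟶ X) {p : X ⟶ Y}
    (hp : p ∈ S.projIdeal X Y) : u ≫ p ∈ S.projIdeal W Y := by
  have hle : S.projIdeal X Y ≤
      Submodule.comap (Linear.leftComp k Y u) (S.projIdeal W Y) := by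
    rw [projIdeal, Submodule.span_le]
    rintro f ⟨Q, a, b, hQ, rfl⟩
    exact Submodule.mem_comap.2 (by
      simpa using S.mem_projIdeal_of_factor hQ (u ≫ a) b)
  simpa using hle hp

lemma comp_mem_projIdeal_right {X Y Z : B} {p : X ⟶ Y} (w : Y ⟶ Z)
    (hp : p ∈ S.projIdeal X Y) : p ≫ w ∈ S.projIdeal X Z := by
  have hle : S.projIdeal X Y ≤
      Submodule.comap (Linear.rightComp k X w) (S.projIdeal X Z) := by
    rw [projIdeal, Submodule.span_le]
    rintro f ⟨Q, a, b, hQ, rfl⟩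
    exact Submodule.mem_comap.2 (by
      simpa [Category.assoc] using S.mem_projIdeal_of_factor hQ a (b ≫ w))
  simpa using hle hp

lemma ses_mono {X Y Z W : B} {m : X ⟶ Y} {e : Y ⟶ Z} (h : S.IsSES m e)
    {v : W ⟶ X} (hv : v ≫ m = 0) : v = 0 := by
  obtain ⟨v', hv', huniq⟩ := S.ses_ker m e h (0 : W ⟶ Y) (by simp)
  rw [huniq v hv, huniq 0 (by simp)]

lemma ses_epi {X Y Z W : B} {m : X ⟶ Y} {e : Y ⟶ Z} (h : S.IsSES m e)
    {u : Z ⟶ W} (hu : e ≫ u = 0) : u = 0 := by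
  obtain ⟨v', hv', huniq⟩ := S.ses_coker m e h (0 : Y ⟶ W) (by simp)
  rw [huniq u hu, huniq 0 (by simp)]

/-- Every map in the projective ideal factors through any admissible mono out of
its source. -/
lemma factor_left {X J Z Y : B} {m : X ⟶ J} {e : J ⟶ Z} (hses : S.IsSES m e)
    {p : X ⟶ Y} (hp : p ∈ S.projIdeal X Y) : ∃ t : J ⟶ Y, p = m ≫ t := by
  have hle : S.projIdeal X Y ≤ LinearMap.range (Linear.leftComp k Y m) := by
    rw [projIdeal, Submodule.span_le]
    rintro f ⟨Q, a, b, hQ, rfl⟩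
    obtain ⟨l, hl⟩ := (S.inj_iff Q).mp hQ m e hses a
    exact ⟨l ≫ b, by rw [Linear.leftComp_apply, ← Category.assoc, hl]⟩
  obtain ⟨t, ht⟩ := hle hp
  exact ⟨t, ht.symm⟩

lemma stIso_refl (A : B) : S.StIso A A :=
  ⟨𝟙 A, 𝟙 A, by simpa using Submodule.zero_mem _, by simpa using Submodule.zero_mem _⟩

lemma stIso_symm {A A' : B} (h : S.StIso A A') : S.StIso A' A := by
  obtain ⟨f, g, hfg, hgf⟩ := h
  exact ⟨g, f, hgf, hfg⟩

lemma stIso_trans {A₁ A₂ A₃ : B} (h1 : S.StIso A₁ A₂) (h2 : S.StIso A₂ A₃) :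
    S.StIso A₁ A₃ := by
  obtain ⟨f₁, g₁, hfg₁, hgf₁⟩ := h1
  obtain ⟨f₂, g₂, hfg₂, hgf₂⟩ := h2
  refine ⟨f₁ ≫ f₂, g₂ ≫ g₁, ?_, ?_⟩
  · have key : (f₁ ≫ f₂) ≫ g₂ ≫ g₁ - 𝟙 A₁ =
        f₁ ≫ ((f₂ ≫ g₂ - 𝟙 A₂) ≫ g₁) + (f₁ ≫ g₁ - 𝟙 A₁) := by
      simp only [Preadditive.comp_add, Preadditive.comp_sub, Preadditive.sub_comp,
        Preadditive.add_comp, Category.assoc, Category.id_comp, Category.comp_id]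
      abel
    rw [key]
    exact Submodule.add_mem _
      (S.comp_mem_projIdeal_left f₁ (S.comp_mem_projIdeal_right g₁ hfg₂)) hfg₁
  · have key : (g₂ ≫ g₁) ≫ f₁ ≫ f₂ - 𝟙 A₃ =
        g₂ ≫ ((g₁ ≫ f₁ - 𝟙 A₂) ≫ f₂) + (g₂ ≫ f₂ - 𝟙 A₃) := by
      simp only [Preadditive.comp_add, Preadditive.comp_sub, Preadditive.sub_comp,
        Preadditive.add_comp, Category.assoc, Category.id_comp, Category.comp_id]
      abel
    rw [key]
    exact Submodule.add_mem _
      (S.comp_mem_projIdeal_left g₂ (S.comp_mem_projIdeal_right f₂ hgf₁)) hgf₂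

lemma sVanish_stIso_left {A A' Bo : B} (h : S.sVanish A Bo) (hi : S.StIso A A') :
    S.sVanish A' Bo := by
  obtain ⟨f, g, hfg, hgf⟩ := hi
  rw [sVanish, eq_top_iff]
  intro u _
  have hfu : f ≫ u ∈ S.projIdeal A Bo := by rw [h]; trivial
  have key : u = g ≫ (f ≫ u) - (g ≫ f - 𝟙 A') ≫ u := by
    simp [Preadditive.sub_comp]
  rw [key]
  exact Submodule.sub_mem _ (S.comp_mem_projIdeal_left g hfu)
    (S.comp_mem_projIdeal_right u hgf)

lemma sVanish_stIso_right {A Bo B' : B} (h : S.sVanish A Bo) (hi : S.StIso Bo B') :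
    S.sVanish A B' := by
  obtain ⟨f, g, hfg, hgf⟩ := hi
  rw [sVanish, eq_top_iff]
  intro u _
  have hug : u ≫ g ∈ S.projIdeal A Bo := by rw [h]; trivial
  have key : u = (u ≫ g) ≫ f - u ≫ (g ≫ f - 𝟙 B') := by
    simp [Preadditive.comp_sub, Category.assoc]
  rw [key]
  exact Submodule.sub_mem _ (S.comp_mem_projIdeal_right f hug)
    (S.comp_mem_projIdeal_left u hgf)

/-- auxiliary step for Schanuel-type arguments (cokernel side). -/
lemma schanuel_aux {X J Z : B} {m : X ⟶ J} {e : J ⟶ Z} (h : S.IsSES m e)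
    (hJ : S.Proj J) {κ : J ⟶ J} {σ : Z ⟶ Z}
    (hκ : m ≫ κ = m) (hσ : e ≫ σ = κ ≫ e) : σ - 𝟙 Z ∈ S.projIdeal Z Z := by
  have h1 : m ≫ (κ - 𝟙 J) = 0 := by
    rw [Preadditive.comp_sub, hκ, Category.comp_id, sub_self]
  obtain ⟨θ, hθ, -⟩ := S.ses_coker m e h (κ - 𝟙 J) h1
  have h2 : e ≫ (σ - 𝟙 Z - θ ≫ e) = 0 := by
    rw [Preadditive.comp_sub, Preadditive.comp_sub, hσ, Category.comp_id,
      ← Category.assoc, hθ, Preadditive.sub_comp, Category.id_comp]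
    abel
  have h3 : σ - 𝟙 Z - θ ≫ e = 0 := S.ses_epi h h2
  have h4 : σ - 𝟙 Z = θ ≫ e := by
    rw [sub_eq_zero] at h3; exact h3
  rw [h4]
  exact S.mem_projIdeal_of_factor hJ θ e

/-- auxiliary step for Schanuel-type arguments (kernel side). -/
lemma schanuel_aux' {X J Z : B} {m : X ⟶ J} {e : J ⟶ Z} (h : S.IsSES m e)
    (hJ : S.Proj J) {κ : J ⟶ J} {σ : X ⟶ X}
    (hκ : κ ≫ e = e) (hσ : σ ≫ m = m ≫ κ) : σ - 𝟙 X ∈ S.projIdeal X X := by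
  have h1 : (κ - 𝟙 J) ≫ e = 0 := by
    rw [Preadditive.sub_comp, hκ, Category.id_comp, sub_self]
  obtain ⟨v, hv, -⟩ := S.ses_ker m e h (κ - 𝟙 J) h1
  have h2 : (σ - 𝟙 X - m ≫ v) ≫ m = 0 := by
    rw [Preadditive.sub_comp, Preadditive.sub_comp, hσ, Category.id_comp,
      Category.assoc, hv, Preadditive.comp_sub, Category.comp_id]
    abel
  have h3 : σ - 𝟙 X - m ≫ v = 0 := S.ses_mono h h2
  have h4 : σ - 𝟙 X = m ≫ v := by
    rw [sub_eq_zero] at h3; exact h3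
  rw [h4]
  exact S.mem_projIdeal_of_factor hJ m v

/-- Schanuel: two admissible short exact sequences with the same left term and
projective-injective middle terms have stably isomorphic right terms. -/
lemma schanuel {X J₁ Z₁ J₂ Z₂ : B} {m₁ : X ⟶ J₁} {e₁ : J₁ ⟶ Z₁}
    {m₂ : X ⟶ J₂} {e₂ : J₂ ⟶ Z₂} (h1 : S.IsSES m₁ e₁) (h2 : S.IsSES m₂ e₂)
    (hJ1 : S.Proj J₁) (hJ2 : S.Proj J₂) : S.StIso Z₁ Z₂ := by
  obtain ⟨φ, hφ⟩ := (S.inj_iff J₂).mp hJ2 m₁ e₁ h1 m₂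
  obtain ⟨φ', hφ'⟩ := (S.inj_iff J₁).mp hJ1 m₂ e₂ h2 m₁
  obtain ⟨ψ, hψ, -⟩ := S.ses_coker m₁ e₁ h1 (φ ≫ e₂)
    (by rw [← Category.assoc, hφ, S.ses_zero _ _ h2])
  obtain ⟨ψ', hψ', -⟩ := S.ses_coker m₂ e₂ h2 (φ' ≫ e₁)
    (by rw [← Category.assoc, hφ', S.ses_zero _ _ h1])
  refine ⟨ψ, ψ', ?_, ?_⟩
  · refine S.schanuel_aux h1 hJ1 (κ := φ ≫ φ') ?_ ?_
    · rw [← Category.assoc, hφ, hφ']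
    · rw [← Category.assoc, hψ, Category.assoc, hψ', ← Category.assoc]
  · refine S.schanuel_aux h2 hJ2 (κ := φ' ≫ φ) ?_ ?_
    · rw [← Category.assoc, hφ', hφ]
    · rw [← Category.assoc, hψ', Category.assoc, hψ, ← Category.assoc]

/-- co-Schanuel: two admissible short exact sequences with the same right term and
projective-injective middle terms have stably isomorphic left terms. -/
lemma coschanuel {X₁ J₁ X₂ J₂ Z : B} {m₁ : X₁ ⟶ J₁} {e₁ : J₁ ⟶ Z}
    {m₂ : X₂ ⟶ J₂} {e₂ : J₂ ⟶ Z} (h1 : S.IsSES m₁ e₁) (h2 : S.IsSES m₂ e₂)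
    (hJ1 : S.Proj J₁) (hJ2 : S.Proj J₂) : S.StIso X₁ X₂ := by
  obtain ⟨L, hL⟩ := (S.proj_iff J₁).mp hJ1 m₂ e₂ h2 e₁
  obtain ⟨L', hL'⟩ := (S.proj_iff J₂).mp hJ2 m₁ e₁ h1 e₂
  obtain ⟨α, hα, -⟩ := S.ses_ker m₂ e₂ h2 (m₁ ≫ L)
    (by rw [Category.assoc, hL, S.ses_zero _ _ h1])
  obtain ⟨β, hβ, -⟩ := S.ses_ker m₁ e₁ h1 (m₂ ≫ L')
    (by rw [Category.assoc, hL', S.ses_zero _ _ h2])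
  refine ⟨α, β, ?_, ?_⟩
  · refine S.schanuel_aux' h1 hJ1 (κ := L ≫ L') ?_ ?_
    · rw [Category.assoc, hL', hL]
    · rw [Category.assoc, hβ, ← Category.assoc, hα, Category.assoc]
  · refine S.schanuel_aux' h2 hJ2 (κ := L' ≫ L) ?_ ?_
    · rw [Category.assoc, hL, hL']
    · rw [Category.assoc, hα, ← Category.assoc, hβ, Category.assoc]

lemma stIso_cosyz_syz (A : B) : S.StIso (S.cosyz (S.syz A)) A :=
  S.schanuel (S.ses_cosyz (S.syz A)) (S.ses_syz A) (S.projI _) (S.projP _)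

lemma stIso_syz_cosyz (A : B) : S.StIso (S.syz (S.cosyz A)) A :=
  S.coschanuel (S.ses_syz (S.cosyz A)) (S.ses_cosyz A) (S.projP _) (S.projI _)

/-- the cosyzygy functor preserves stable isomorphism. -/
lemma stIso_cosyz {A A' : B} (h : S.StIso A A') : S.StIso (S.cosyz A) (S.cosyz A') := by
  obtain ⟨f, g, hfg, hgf⟩ := h
  obtain ⟨F, hF⟩ := (S.inj_iff (S.I A')).mp (S.projI A') (S.en A) (S.cosyzEpi A)
    (S.ses_cosyz A) (f ≫ S.en A')
  obtain ⟨G, hG⟩ := (S.inj_iff (S.I A)).mp (S.projI A) (S.en A') (S.cosyzEpi A')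
    (S.ses_cosyz A') (g ≫ S.en A)
  obtain ⟨f', hf', -⟩ := S.ses_coker _ _ (S.ses_cosyz A) (F ≫ S.cosyzEpi A')
    (by rw [← Category.assoc, hF, Category.assoc, S.ses_zero _ _ (S.ses_cosyz A'),
      comp_zero])
  obtain ⟨g', hg', -⟩ := S.ses_coker _ _ (S.ses_cosyz A') (G ≫ S.cosyzEpi A)
    (by rw [← Category.assoc, hG, Category.assoc, S.ses_zero _ _ (S.ses_cosyz A),
      comp_zero])
  have main : ∀ (A A' : B) (f : A ⟶ A') (g : A' ⟶ A)
      (hfg : f ≫ g - 𝟙 A ∈ S.projIdeal A A)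
      (F : S.I A ⟶ S.I A') (hF : S.en A ≫ F = f ≫ S.en A')
      (G : S.I A' ⟶ S.I A) (hG : S.en A' ≫ G = g ≫ S.en A)
      (f' : S.cosyz A ⟶ S.cosyz A') (hf' : S.cosyzEpi A ≫ f' = F ≫ S.cosyzEpi A')
      (g' : S.cosyz A' ⟶ S.cosyz A) (hg' : S.cosyzEpi A' ≫ g' = G ≫ S.cosyzEpi A),
      f' ≫ g' - 𝟙 (S.cosyz A) ∈ S.projIdeal (S.cosyz A) (S.cosyz A) := by
    clear hf' hg' hF hG hfg f g f' g' F G A A' hgf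
    intro A A' f g hfg F hF G hG f' hf' g' hg'
    obtain ⟨q, hq⟩ := S.factor_left (S.ses_cosyz A) hfg
    have h1 : S.en A ≫ (F ≫ G - 𝟙 (S.I A) - q ≫ S.en A) = 0 := by
      have e1 : S.en A ≫ F ≫ G = (f ≫ g) ≫ S.en A := by
        rw [← Category.assoc, hF, Category.assoc, hG, ← Category.assoc]
      have e2 : (f ≫ g) ≫ S.en A = S.en A + S.en A ≫ q ≫ S.en A := by
        have hfg' : f ≫ g = 𝟙 A + S.en A ≫ q := by rw [← hq]; abel
        rw [hfg', Preadditive.add_comp, Category.id_comp, Category.assoc]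
      rw [Preadditive.comp_sub, Preadditive.comp_sub, e1, e2, ← Category.assoc,
        Category.comp_id]
      abel
    obtain ⟨θ, hθ, -⟩ := S.ses_coker _ _ (S.ses_cosyz A)
      (F ≫ G - 𝟙 (S.I A) - q ≫ S.en A) h1
    have h2 : S.cosyzEpi A ≫ (f' ≫ g' - 𝟙 (S.cosyz A) - θ ≫ S.cosyzEpi A) = 0 := by
      have e1 : S.cosyzEpi A ≫ f' ≫ g' = (F ≫ G) ≫ S.cosyzEpi A := by
        rw [← Category.assoc, hf', Category.assoc, hg', ← Category.assoc]
      have e2 : F ≫ G = 𝟙 (S.I A) + q ≫ S.en A + S.cosyzEpi A ≫ θ := by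
        rw [hθ]; abel
      have ez : S.en A ≫ S.cosyzEpi A = 0 := S.ses_zero _ _ (S.ses_cosyz A)
      rw [Preadditive.comp_sub, Preadditive.comp_sub, e1, e2]
      simp only [Preadditive.add_comp, Category.id_comp, Category.comp_id,
        Category.assoc, ez, comp_zero, add_zero, zero_add]
      abel
    have h3 : f' ≫ g' - 𝟙 (S.cosyz A) - θ ≫ S.cosyzEpi A = 0 := S.ses_epi (S.ses_cosyz A) h2
    have h4 : f' ≫ g' - 𝟙 (S.cosyz A) = θ ≫ S.cosyzEpi A := by
      rw [sub_eq_zero] at h3; exact h3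
    rw [h4]
    exact S.mem_projIdeal_of_factor (S.projI A) θ (S.cosyzEpi A)
  exact ⟨f', g', main A A' f g hfg F hF G hG f' hf' g' hg',
    main A' A g f hgf G hG F hF g' hg' f' hf'⟩

/-- If `B̄(ΩA, Y) = 0` then `B̄(A, Ω⁻¹Y) = 0`. -/
lemma sVanish_cosyz_of_syz {A Bo : B} (h : S.sVanish (S.syz A) Bo) :
    S.sVanish A (S.cosyz Bo) := by
  rw [sVanish, eq_top_iff]
  intro u _
  obtain ⟨L, hL⟩ := (S.proj_iff (S.P A)).mp (S.projP A) (S.en Bo) (S.cosyzEpi Bo)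
    (S.ses_cosyz Bo) (S.pr A ≫ u)
  have h1 : (S.syzMono A ≫ L) ≫ S.cosyzEpi Bo = 0 := by
    rw [Category.assoc, hL, ← Category.assoc, S.ses_zero _ _ (S.ses_syz A), zero_comp]
  obtain ⟨v, hv, -⟩ := S.ses_ker (S.en Bo) (S.cosyzEpi Bo) (S.ses_cosyz Bo)
    (S.syzMono A ≫ L) h1
  have hvmem : v ∈ S.projIdeal (S.syz A) Bo := by rw [h]; trivial
  obtain ⟨t, ht⟩ := S.factor_left (S.ses_syz A) hvmem
  have h2 : S.syzMono A ≫ (L - t ≫ S.en Bo) = 0 := by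
    have e1 : S.syzMono A ≫ (t ≫ S.en Bo) = v ≫ S.en Bo := by
      rw [← Category.assoc, ← ht]
    rw [Preadditive.comp_sub, e1, hv, sub_self]
  obtain ⟨w, hw, -⟩ := S.ses_coker (S.syzMono A) (S.pr A) (S.ses_syz A)
    (L - t ≫ S.en Bo) h2
  have h3 : S.pr A ≫ (u - w ≫ S.cosyzEpi Bo) = 0 := by
    rw [Preadditive.comp_sub, ← Category.assoc, hw, Preadditive.sub_comp,
      Category.assoc, hL, S.ses_zero _ _ (S.ses_cosyz Bo),
      comp_zero, sub_zero, sub_self]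
  have h4 : u = w ≫ S.cosyzEpi Bo := by
    have := S.ses_epi (S.ses_syz A) h3
    rw [sub_eq_zero] at this; exact this
  rw [h4]
  exact S.mem_projIdeal_of_factor (S.projI Bo) w (S.cosyzEpi Bo)

lemma sVanish_iter_cosyz (n : ℕ) {A Bo : B} (h : S.sVanish (S.syz^[n] A) Bo) :
    S.sVanish A (S.cosyz^[n] Bo) := by
  induction n generalizing Bo with
  | zero => exact h
  | succ n ih =>
    rw [Function.iterate_succ_apply'] at h
    have h2 := ih (S.sVanish_cosyz_of_syz h)
    have e : S.cosyz^[n+1] Bo = S.cosyz^[n] (S.cosyz Bo) :=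
      Function.iterate_succ_apply _ _ _
    rw [e]; exact h2

lemma sVanish_cosyz_both {A Bo : B} (h : S.sVanish A Bo) :
    S.sVanish (S.cosyz A) (S.cosyz Bo) := by
  have h1 : S.sVanish (S.syz (S.cosyz A)) Bo :=
    S.sVanish_stIso_left h (S.stIso_symm (S.stIso_syz_cosyz A))
  exact S.sVanish_cosyz_of_syz h1

lemma sVanish_iter_both (n : ℕ) {A Bo : B} (h : S.sVanish A Bo) :
    S.sVanish (S.cosyz^[n] A) (S.cosyz^[n] Bo) := by
  induction n with
  | zero => exact h
  | succ n ih =>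
    rw [Function.iterate_succ_apply', Function.iterate_succ_apply']
    exact S.sVanish_cosyz_both ih

lemma stIso_iter_cosyz (n : ℕ) {A A' : B} (h : S.StIso A A') :
    S.StIso (S.cosyz^[n] A) (S.cosyz^[n] A') := by
  induction n with
  | zero => exact h
  | succ n ih =>
    rw [Function.iterate_succ_apply', Function.iterate_succ_apply']
    exact S.stIso_cosyz ih

lemma stIso_cancel (n : ℕ) (A : B) : S.StIso (S.cosyz^[n] (S.syz^[n] A)) A := by
  induction n with
  | zero => exact S.stIso_refl A
  | succ n ih =>
    have e : S.cosyz^[n+1] (S.syz^[n+1] A) = S.cosyz^[n] (S.cosyz (S.syz (S.syz^[n] A))) := by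
      rw [Function.iterate_succ_apply, Function.iterate_succ_apply']
    rw [e]
    exact S.stIso_trans
      (S.stIso_iter_cosyz n (S.stIso_cosyz_syz (S.syz^[n] A))) ih

/-- The key orthogonality consequence: for `X, X' ∈ C` and `1 ≤ j ≤ d-1`,
`B̄(X[j], X') = 0`. -/
lemma star {C : Set B} {d : ℕ} (hd : 2 ≤ d) (hmax : S.MaxOrthogonal C d)
    (hstab : S.ShiftStable C d) {X X' : B} (hX : X ∈ C) (hX' : X' ∈ C)
    {j : ℕ} (h1 : 1 ≤ j) (h2 : j ≤ d - 1) : S.sVanish (S.cosyz^[j] X) X' := by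
  obtain ⟨C₁, hC₁, hsi⟩ := hstab X' hX'
  have h0 : S.sVanish (S.syz^[d - j] X) C₁ :=
    (hmax.1 X).mp hX (d - j) (by omega) (by omega) C₁ hC₁
  have h3 : S.sVanish X (S.cosyz^[d - j] C₁) := S.sVanish_iter_cosyz (d - j) h0
  have h4 : S.sVanish (S.cosyz^[j] X) (S.cosyz^[j] (S.cosyz^[d - j] C₁)) :=
    S.sVanish_iter_both j h3
  have e : S.cosyz^[j] (S.cosyz^[d - j] C₁) = S.cosyz^[d] C₁ := by
    rw [← Function.iterate_add_apply]
    congr 1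
    omega
  rw [e] at h4
  have h5 : S.StIso (S.cosyz^[d] C₁) X' :=
    S.stIso_trans (S.stIso_symm (S.stIso_iter_cosyz d hsi)) (S.stIso_cancel d X')
  exact S.sVanish_stIso_right h4 h5


end Helpers

end FrobeniusSetup

open FrobeniusSetup in
/-- Theorem 2.5(3).  With `C` a functorially finite maximal
`(d-1)`-orthogonal subcategory, `d ≥ 2`, `C̄[d] = C̄`:  for every `M ∈ mod-C̄`
one has `Tor^C_i(M, C̄) = 0` for all `i ≠ 0, d+1`.  The groups `Tor^C_i(M,C̄)`
are computed by applying `- ⊗_C C̄` (i.e. `B(-,X) ↦ B̄(-,X)`) to a projective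
resolution of `M` in `mod-C`; by Theorem 2.5(1) such resolutions of length
`d+2` by representables `B(-,C_i)`, `C_i ∈ C`, exist, and we quantify over all
of them.  Vanishing of `Tor_i` for `1 ≤ i ≤ d` is exactness of the induced
stable complex at the spots `1,…,d` (for `i ≥ d+2` the complex vanishes, so
`Tor_i = 0` is automatic there, and `Tor_{d+1}` is the kernel at the top). -/
theorem stmt9_tor_vanishing
    {k : Type} [Field k] {B : Type u} [Category.{v} B] [Preadditive B]
    [CategoryTheory.Linear k B] [HasFiniteBiproducts B] [HasBinaryBiproducts B]
    (S : FrobeniusSetup k B) (d : ℕ) (hd : 2 ≤ d) (C : Set B)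
    (hff : S.FunctoriallyFinite C) (hmax : S.MaxOrthogonal C d)
    (hstab : S.ShiftStable C d)
    (M : (ObjectProperty.FullSubcategory (· ∈ C))ᵒᵖ ⥤ ModuleCat k) (hM : S.IsFPStable C M)
    (Cobj : ℕ → B) (hC : ∀ i, i ≤ d + 1 → Cobj i ∈ C)
    (g : ∀ i : ℕ, Cobj (i + 1) ⟶ Cobj i) (ε : LinRep (k := k) C (Cobj 0) ⟶ M)
    (hres : ∀ c, Function.Surjective (ε.app c) ∧
      Function.Exact ((lMap (k := k) C (g 0)).app c) (ε.app c) ∧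
      (∀ i, i < d → Function.Exact ((lMap (k := k) C (g (i + 1))).app c)
        ((lMap (k := k) C (g i)).app c)) ∧
      Function.Injective ((lMap (k := k) C (g d)).app c)) :
    ∀ c : (ObjectProperty.FullSubcategory (· ∈ C))ᵒᵖ, ∀ i, i < d →
      Function.Exact ((S.sMap C (g (i + 1))).app c) ((S.sMap C (g i)).app c) := by
  classical
  -- projective(-injective) objects all belong to `C` by maximal orthogonality
  have projC : ∀ {Q : B}, S.Proj Q → Q ∈ C := fun {Q} hQ =>
    (hmax.2 Q).mpr fun i _ _ C₀ _ => S.sVanish_tgt hQ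
  -- `M` kills projective objects
  have Mtriv : ∀ (J : B) (hJ : J ∈ C), S.Proj J →
      ∀ y : M.obj (Opposite.op (⟨J, hJ⟩ : ObjectProperty.FullSubcategory (· ∈ C))), y = 0 := by
    intro J hJ hPJ y
    obtain ⟨C₁', C₀', -, -, φ, ε', hp⟩ := hM
    obtain ⟨x, hx⟩ := (hp (Opposite.op ⟨J, hJ⟩)).1 y
    have hx0 : x = 0 := by
      obtain ⟨u, rfl⟩ := Submodule.Quotient.mk_surjective _ x
      exact (Submodule.Quotient.mk_eq_zero _).mpr (S.mem_projIdeal_src hPJ u)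
    rw [← hx, hx0, map_zero]
  -- consecutive differentials compose to zero
  have gz : ∀ j, j < d → g (j + 1) ≫ g j = 0 := by
    intro j hj
    have hmem : Cobj (j+2) ∈ C := hC (j+2) (by omega)
    have h := ((hres (Opposite.op ⟨Cobj (j+2), hmem⟩)).2.2.1 j hj).apply_apply_eq_zero
      (𝟙 (Cobj (j+2)))
    have h' : (𝟙 (Cobj (j+2)) ≫ g (j+1)) ≫ g j = 0 := h
    simpa using h'
  -- every map from a projective object of `C` into `Cobj 0` lifts along `g 0`
  have lift0 : ∀ (J : B), S.Proj J → ∀ β : J ⟶ Cobj 0,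
      ∃ σ : J ⟶ Cobj 1, σ ≫ g 0 = β := by
    intro J hPJ β
    have hJ : J ∈ C := projC hPJ
    have hβ : ε.app (Opposite.op ⟨J, hJ⟩) β = 0 := Mtriv J hJ hPJ _
    exact ((hres (Opposite.op ⟨J, hJ⟩)).2.1 β).mp hβ
  -- exactness of the Hom-resolution at objects of `C`
  have liftS : ∀ (c' : (ObjectProperty.FullSubcategory (· ∈ C))ᵒᵖ) (m : ℕ), m < d →
      ∀ β : c'.unop.obj ⟶ Cobj (m+1), β ≫ g m = 0 →
        ∃ σ : c'.unop.obj ⟶ Cobj (m+2), σ ≫ g (m+1) = β := by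
    intro c' m hm β hβ
    exact (((hres c').2.2.1 m hm) β).mp hβ
  -- surjectivity in degree 0 for stably-trivial sources
  have E0 : ∀ Y : B, S.sVanish Y (Cobj 0) → ∀ r : Y ⟶ Cobj 0,
      ∃ r' : Y ⟶ Cobj 1, r' ≫ g 0 = r := by
    intro Y hY r
    have hrmem : r ∈ S.projIdeal Y (Cobj 0) := by rw [hY]; trivial
    obtain ⟨β, hβ⟩ := S.factor_left (S.ses_cosyz Y) hrmem
    obtain ⟨σ, hσ⟩ := lift0 (S.I Y) (S.projI Y) β
    exact ⟨S.en Y ≫ σ, by rw [Category.assoc, hσ, ← hβ]⟩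
  -- the descent lemma: surjectivity onto cycles for maps from iterated cosyzygies
  have E : ∀ m : ℕ, m + 1 < d → ∀ Y : B,
      (∀ l : ℕ, l ≤ m + 1 → S.sVanish (S.cosyz^[l] Y) (Cobj (m + 1 - l))) →
      ∀ r : Y ⟶ Cobj (m + 1), r ≫ g m = 0 →
      ∃ r' : Y ⟶ Cobj (m + 2), r' ≫ g (m + 1) = r := by
    intro m
    induction m with
    | zero =>
      intro hmd Y hY r hcyc
      have hY0 : S.sVanish Y (Cobj 1) := hY 0 (by omega)
      have hrmem : r ∈ S.projIdeal Y (Cobj 1) := by rw [hY0]; trivial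
      obtain ⟨β, hβ⟩ := S.factor_left (S.ses_cosyz Y) hrmem
      have h1 : S.en Y ≫ (β ≫ g 0) = 0 := by
        rw [← Category.assoc, ← hβ, hcyc]
      obtain ⟨ρ, hρ, -⟩ := S.ses_coker _ _ (S.ses_cosyz Y) (β ≫ g 0) h1
      have hY1 : S.sVanish (S.cosyz Y) (Cobj 0) := hY 1 (by omega)
      obtain ⟨ρ', hρ'⟩ := E0 (S.cosyz Y) hY1 ρ
      have h2 : (β - S.cosyzEpi Y ≫ ρ') ≫ g 0 = 0 := by
        rw [Preadditive.sub_comp, Category.assoc, hρ', hρ, sub_self]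
      obtain ⟨σ, hσ⟩ := liftS (Opposite.op ⟨S.I Y, projC (S.projI Y)⟩) 0 (by omega)
        (β - S.cosyzEpi Y ≫ ρ') h2
      refine ⟨S.en Y ≫ σ, ?_⟩
      rw [Category.assoc, hσ, Preadditive.comp_sub, ← Category.assoc,
        S.ses_zero _ _ (S.ses_cosyz Y), zero_comp, sub_zero, ← hβ]
    | succ m ih =>
      intro hmd Y hY r hcyc
      have hY0 : S.sVanish Y (Cobj (m + 2)) := hY 0 (by omega)
      have hrmem : r ∈ S.projIdeal Y (Cobj (m + 2)) := by rw [hY0]; trivial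
      obtain ⟨β, hβ⟩ := S.factor_left (S.ses_cosyz Y) hrmem
      have h1 : S.en Y ≫ (β ≫ g (m + 1)) = 0 := by
        rw [← Category.assoc, ← hβ, hcyc]
      obtain ⟨ρ, hρ, -⟩ := S.ses_coker _ _ (S.ses_cosyz Y) (β ≫ g (m + 1)) h1
      have hρcyc : ρ ≫ g m = 0 := by
        refine S.ses_epi (S.ses_cosyz Y) ?_
        rw [← Category.assoc, hρ, Category.assoc, gz m (by omega), comp_zero]
      have hY' : ∀ l : ℕ, l ≤ m + 1 →
          S.sVanish (S.cosyz^[l] (S.cosyz Y)) (Cobj (m + 1 - l)) := by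
        intro l hl
        have h2 : S.sVanish (S.cosyz^[l] (S.cosyz Y)) (Cobj (m + 1 + 1 - (l + 1))) :=
          hY (l + 1) (by omega)
        have h3 : m + 1 + 1 - (l + 1) = m + 1 - l := by omega
        rwa [h3] at h2
      obtain ⟨ρ', hρ'⟩ := ih (by omega) (S.cosyz Y) hY' ρ hρcyc
      have h2 : (β - S.cosyzEpi Y ≫ ρ') ≫ g (m + 1) = 0 := by
        rw [Preadditive.sub_comp, Category.assoc, hρ', hρ, sub_self]
      obtain ⟨σ, hσ⟩ := liftS (Opposite.op ⟨S.I Y, projC (S.projI Y)⟩) (m + 1) (by omega)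
        (β - S.cosyzEpi Y ≫ ρ') h2
      refine ⟨S.en Y ≫ σ, ?_⟩
      rw [Category.assoc, hσ, Preadditive.comp_sub, ← Category.assoc,
        S.ses_zero _ _ (S.ses_cosyz Y), zero_comp, sub_zero, ← hβ]
  -- main argument
  intro c i hi
  have hXC : c.unop.obj ∈ C := c.unop.property
  intro y
  constructor
  · -- kernel ⊆ image
    intro hy
    obtain ⟨f, rfl⟩ := Submodule.Quotient.mk_surjective _ y
    have hy' : S.sMk (f ≫ g i) = 0 := hy
    have hmem : f ≫ g i ∈ S.projIdeal c.unop.obj (Cobj i) :=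
      (Submodule.Quotient.mk_eq_zero _).mp hy'
    obtain ⟨t, ht⟩ := S.factor_left (S.ses_cosyz c.unop.obj) hmem
    rcases Nat.eq_zero_or_pos i with hi0 | hipos
    · subst hi0
      obtain ⟨s, hs⟩ := lift0 (S.I c.unop.obj) (S.projI _) t
      have h2 : (f - S.en c.unop.obj ≫ s) ≫ g 0 = 0 := by
        rw [Preadditive.sub_comp, ht, Category.assoc, hs, sub_self]
      obtain ⟨h, hh⟩ := liftS c 0 (by omega) (f - S.en c.unop.obj ≫ s) h2
      refine ⟨S.sMk h, ?_⟩
      show S.sMk (h ≫ g (0+1)) = S.sMk f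
      refine (Submodule.Quotient.eq _).mpr ?_
      rw [hh]
      have e4 : f - S.en c.unop.obj ≫ s - f = -(S.en c.unop.obj ≫ s) := by abel
      rw [e4]
      exact Submodule.neg_mem _
        (S.mem_projIdeal_of_factor (S.projI _) (S.en c.unop.obj) s)
    · obtain ⟨i', rfl⟩ : ∃ i', i = i' + 1 := ⟨i - 1, by omega⟩
      have h1 : S.en c.unop.obj ≫ (t ≫ g i') = 0 := by
        rw [← Category.assoc, ← ht, Category.assoc, gz i' (by omega), comp_zero]
      obtain ⟨r, hr, -⟩ := S.ses_coker _ _ (S.ses_cosyz c.unop.obj) (t ≫ g i') h1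
      have hYl : ∀ l : ℕ, l ≤ i' →
          S.sVanish (S.cosyz^[l] (S.cosyz c.unop.obj)) (Cobj (i' - l)) := by
        intro l hl
        exact S.star hd hmax hstab hXC (hC (i'-l) (by omega))
          (show 1 ≤ l + 1 by omega) (show l + 1 ≤ d - 1 by omega)
      have hEr : ∃ r' : S.cosyz c.unop.obj ⟶ Cobj (i' + 1), r' ≫ g i' = r := by
        rcases Nat.eq_zero_or_pos i' with hiz | hipos'
        · subst hiz
          exact E0 (S.cosyz c.unop.obj) (hYl 0 (by omega)) r
        · obtain ⟨m, rfl⟩ : ∃ m, i' = m + 1 := ⟨i' - 1, by omega⟩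
          have hrcyc : r ≫ g m = 0 := by
            refine S.ses_epi (S.ses_cosyz c.unop.obj) ?_
            rw [← Category.assoc, hr, Category.assoc, gz m (by omega), comp_zero]
          have hYl' : ∀ l : ℕ, l ≤ m + 1 →
              S.sVanish (S.cosyz^[l] (S.cosyz c.unop.obj)) (Cobj (m + 1 - l)) :=
            fun l hl => hYl l (by omega)
          exact E m (by omega) (S.cosyz c.unop.obj) hYl' r hrcyc
      obtain ⟨r', hr'⟩ := hEr
      have h2 : (t - S.cosyzEpi c.unop.obj ≫ r') ≫ g i' = 0 := by
        rw [Preadditive.sub_comp, Category.assoc, hr', hr, sub_self]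
      obtain ⟨s, hs⟩ := liftS (Opposite.op ⟨S.I c.unop.obj, projC (S.projI _)⟩) i'
        (by omega) (t - S.cosyzEpi c.unop.obj ≫ r') h2
      have h3 : (f - S.en c.unop.obj ≫ s) ≫ g (i'+1) = 0 := by
        rw [Preadditive.sub_comp, ht, Category.assoc, hs, Preadditive.comp_sub,
          ← Category.assoc, S.ses_zero _ _ (S.ses_cosyz c.unop.obj), zero_comp,
          sub_zero, sub_self]
      obtain ⟨h, hh⟩ := liftS c (i'+1) hi (f - S.en c.unop.obj ≫ s) h3
      refine ⟨S.sMk h, ?_⟩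
      show S.sMk (h ≫ g (i'+1+1)) = S.sMk f
      refine (Submodule.Quotient.eq _).mpr ?_
      rw [hh]
      have e4 : f - S.en c.unop.obj ≫ s - f = -(S.en c.unop.obj ≫ s) := by abel
      rw [e4]
      exact Submodule.neg_mem _
        (S.mem_projIdeal_of_factor (S.projI _) (S.en c.unop.obj) s)
  · -- image ⊆ kernel
    rintro ⟨x, rfl⟩
    obtain ⟨h, rfl⟩ := Submodule.Quotient.mk_surjective _ x
    show S.sMk ((h ≫ g (i+1)) ≫ g i) = 0
    rw [Category.assoc, gz i hi, comp_zero]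
    exact (Submodule.Quotient.mk_eq_zero _).mpr (Submodule.zero_mem _)
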